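/- The function θ : Ω → ℝ defined by θ(z) = min_{s ∈ Ω} φ_C(JV(z)(s − z)) is continuous on Ω. -/

import Mathlib

open Metric Set

/-- The oriented distance function associated with the cone `C`:
`φ_C(y) = d(y, -C) - d(y, ℝ^m \\ (-C))`. -/
noncomputable def phiC {m : ℕ} (C : Set (EuclideanSpace ℝ (Fin m)))
    (y : EuclideanSpace ℝ (Fin m)) : ℝ :=
  Metric.infDist y (-C) - Metric.infDist y ((-C)ᶜ)

/-- The optimal value `θ(z) = min_{s ∈ Ω} φ_C (JV(z)(s - z))`. -/
noncomputable def theta {m n : ℕ} (C : Set (EuclideanSpace ℝ (Fin m)))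
    (Ω : Set (EuclideanSpace ℝ (Fin n)))
    (V : EuclideanSpace ℝ (Fin n) → EuclideanSpace ℝ (Fin m))
    (z : EuclideanSpace ℝ (Fin n)) : ℝ :=
  sInf ((fun s => phiC C (fderiv ℝ V z (s - z))) '' Ω)

theorem theta_continuousOn {m n : ℕ}
    (C : Set (EuclideanSpace ℝ (Fin m)))
    (hclosed : IsClosed C) (hconv : Convex ℝ C)
    (hcone : ∀ a ∈ C, ∀ l : ℝ, 0 ≤ l → l • a ∈ C)
    (hpointed : C ∩ (-C) = {0})
    (hint : (interior C).Nonempty)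
    (Ω : Set (EuclideanSpace ℝ (Fin n)))
    (hΩne : Ω.Nonempty) (hΩcpt : IsCompact Ω) (hΩconv : Convex ℝ Ω)
    (V : EuclideanSpace ℝ (Fin n) → EuclideanSpace ℝ (Fin m))
    (hV : ContDiff ℝ 1 V) :
    ContinuousOn (theta C Ω V) Ω := by
  have hphi : Continuous (phiC C) :=
    (continuous_infDist_pt _).sub (continuous_infDist_pt _)
  have hfd : Continuous (fun z => fderiv ℝ V z) :=
    hV.continuous_fderiv one_ne_zero
  have hg : Continuous (↿(fun z s : EuclideanSpace ℝ (Fin n) =>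
      phiC C (fderiv ℝ V z (s - z)))) := by
    apply hphi.comp
    exact isBoundedBilinearMap_apply.continuous.comp
      ((hfd.comp continuous_fst).prodMk (continuous_snd.sub continuous_fst))
  exact (hΩcpt.continuous_sInf hg).continuousOn
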